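/- For positive integers n, k with 0 ≤ k ≤ n, the following identity of formal power series holds: ∑_{m ≥ 0} (∑_{j=0}^{k} (-1)^j C(k,j) C((n-j)(m+1), n)) t^m = (∑_{w ∈ W_{n,k}} t^{n−1−des(w)}) / (1−t)^{n+1}, where W_{n,k} is the set of words w ∈ [n]^n in which each of 1,…,k appears at least once, and des(w) = #{i ∈ [n−1] : w_i > w_{i+1}}. -/

import Mathlib

open Finset PowerSeries

/-- The number of descents of a word given as a list: indices `i` with `l_i > l_{i+1}`. -/
def des (l : List ℕ) : ℕ := (l.zip l.tail).countP (fun p => p.2 < p.1)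

namespace Stmt12

lemma strictMono_of_adj {n : ℕ} {β : Type*} [Preorder β] {f : Fin n → β}
    (h : ∀ i : Fin n, ∀ hi : (i:ℕ)+1 < n, f i < f ⟨(i:ℕ)+1, hi⟩) : StrictMono f := by
  have key : ∀ d : ℕ, ∀ i j : Fin n, (j:ℕ) = (i:ℕ) + d + 1 → f i < f j := by
    intro d
    induction d with
    | zero =>
      intro i j hj
      have h1 : (i:ℕ)+1 < n := hj ▸ j.isLt
      have hje : j = ⟨(i:ℕ)+1, h1⟩ := Fin.ext (by simpa using hj)
      exact hje ▸ h i h1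
    | succ d ih =>
      intro i j hj
      have h1 : (i:ℕ)+1 < n := by have := j.isLt; omega
      exact (h i h1).trans (ih ⟨(i:ℕ)+1, h1⟩ j (by simp; omega))
  intro i j hij
  exact key ((j:ℕ) - (i:ℕ) - 1) i j (by have := (Fin.lt_iff_val_lt_val.mp hij); omega)

lemma monotone_of_adj {n : ℕ} {β : Type*} [Preorder β] {f : Fin n → β}
    (h : ∀ i : Fin n, ∀ hi : (i:ℕ)+1 < n, f i ≤ f ⟨(i:ℕ)+1, hi⟩) : Monotone f := by
  have key : ∀ d : ℕ, ∀ i j : Fin n, (j:ℕ) = (i:ℕ) + d → f i ≤ f j := by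
    intro d
    induction d with
    | zero => intro i j hj; have : j = i := Fin.ext (by omega); exact this ▸ le_refl _
    | succ d ih =>
      intro i j hj
      have h1 : (i:ℕ)+1 < n := by have := j.isLt; omega
      exact (h i h1).trans (ih ⟨(i:ℕ)+1, h1⟩ j (by simp; omega))
  intro i j hij
  exact key ((j:ℕ) - (i:ℕ)) i j (by have := (Fin.le_iff_val_le_val.mp hij); omega)


variable {α β : Type*} [LinearOrder α] [LinearOrder β]

def descs {n : ℕ} (w : Fin n → α) : Finset (Fin n) :=
  univ.filter (fun i => ∃ h : (i:ℕ)+1 < n, w ⟨(i:ℕ)+1, h⟩ < w i)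

def ascs {n : ℕ} (w : Fin n → α) : Finset (Fin n) :=
  univ.filter (fun i => ∃ h : (i:ℕ)+1 < n, w i < w ⟨(i:ℕ)+1, h⟩)

def weaks {n : ℕ} (w : Fin n → α) : Finset (Fin n) :=
  univ.filter (fun i => ∃ h : (i:ℕ)+1 < n, ¬ w i < w ⟨(i:ℕ)+1, h⟩)

lemma card_filter_adj {n : ℕ} : (univ.filter (fun i : Fin n => (i:ℕ)+1 < n)).card = n - 1 := by
  rcases Nat.eq_zero_or_pos n with h | h
  · subst h; simp
  · have : (univ.filter (fun i : Fin n => (i:ℕ)+1 < n)) = univ \ {⟨n-1, by omega⟩} := by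
      ext i
      simp only [mem_filter, mem_univ, true_and, mem_sdiff, mem_singleton]
      constructor
      · intro hi hc; rw [hc] at hi; simp at hi; omega
      · intro hi
        have : (i:ℕ) ≠ n - 1 := fun hc => hi (Fin.ext hc)
        have := i.isLt; omega
    rw [this, card_sdiff_of_subset (by simp), card_univ]
    simp

lemma ascs_union_weaks {n : ℕ} (w : Fin n → α) :
    ascs w ∪ weaks w = univ.filter (fun i : Fin n => (i:ℕ)+1 < n) := by
  ext i
  simp only [ascs, weaks, mem_union, mem_filter, mem_univ, true_and]
  constructor
  · rintro (⟨h, _⟩ | ⟨h, _⟩) <;> exact h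
  · intro h; by_cases hc : w i < w ⟨(i:ℕ)+1, h⟩
    · exact Or.inl ⟨h, hc⟩
    · exact Or.inr ⟨h, hc⟩

lemma ascs_card_add_weaks_card {n : ℕ} (w : Fin n → α) :
    (ascs w).card + (weaks w).card = n - 1 := by
  rw [← card_filter_adj (n := n), ← ascs_union_weaks w, card_union_of_disjoint]
  rw [disjoint_left]
  intro i hi hi'
  simp only [ascs, weaks, mem_filter, mem_univ, true_and] at hi hi'
  obtain ⟨h, hlt⟩ := hi
  obtain ⟨h', hnlt⟩ := hi'
  exact hnlt hlt

lemma descs_card_le {n : ℕ} (w : Fin n → α) : (descs w).card ≤ n - 1 := by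
  rw [← card_filter_adj (n := n)]
  apply card_le_card
  intro i hi
  simp only [descs, mem_filter, mem_univ, true_and] at hi ⊢
  exact hi.1

lemma descs_comp_strictMono {n : ℕ} {g : α → β} (hg : StrictMono g) (w : Fin n → α) :
    descs (g ∘ w) = descs w := by
  ext i
  simp only [descs, mem_filter, mem_univ, true_and, Function.comp_apply, hg.lt_iff_lt]

lemma ascs_comp_strictMono {n : ℕ} {g : α → β} (hg : StrictMono g) (w : Fin n → α) :
    ascs (g ∘ w) = ascs w := by
  ext i
  simp only [ascs, mem_filter, mem_univ, true_and, Function.comp_apply, hg.lt_iff_lt]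

lemma descs_comp_rev_card {n : ℕ} (w : Fin n → α) :
    (descs (w ∘ Fin.rev)).card = (ascs w).card := by
  apply card_nbij' (i := fun i => ⟨(n - 2 - (i:ℕ)) % n, Nat.mod_lt _ i.pos⟩)
    (j := fun i => ⟨(n - 2 - (i:ℕ)) % n, Nat.mod_lt _ i.pos⟩)
  · rintro a ha
    simp only [descs, ascs, mem_coe, mem_filter, mem_univ, true_and] at ha ⊢
    obtain ⟨h, hlt⟩ := ha
    have h2 : (n - 2 - (a:ℕ)) % n = n - 2 - (a:ℕ) := Nat.mod_eq_of_lt (by omega)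
    refine ⟨by simp [h2]; omega, ?_⟩
    have hlt' : w (Fin.rev ⟨(a:ℕ)+1, h⟩) < w (Fin.rev a) := hlt
    convert hlt' using 2 <;> (apply Fin.ext; simp [Fin.val_rev, h2]; omega)
  · rintro a ha
    simp only [descs, ascs, mem_coe, mem_filter, mem_univ, true_and] at ha ⊢
    obtain ⟨h, hlt⟩ := ha
    have h2 : (n - 2 - (a:ℕ)) % n = n - 2 - (a:ℕ) := Nat.mod_eq_of_lt (by omega)
    refine ⟨by simp [h2]; omega, ?_⟩
    simp only [Function.comp_apply]
    convert hlt using 2 <;> (apply Fin.ext; simp [Fin.val_rev, h2]; omega)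
  · rintro a ha
    simp only [descs, mem_coe, mem_filter, mem_univ, true_and] at ha
    obtain ⟨h, _⟩ := ha
    apply Fin.ext
    have h2 : (n - 2 - (a:ℕ)) % n = n - 2 - (a:ℕ) := Nat.mod_eq_of_lt (by omega)
    simp [h2, Nat.mod_eq_of_lt (show n - 2 - (n-2-(a:ℕ)) < n by omega)]
    omega
  · rintro a ha
    simp only [ascs, mem_coe, mem_filter, mem_univ, true_and] at ha
    obtain ⟨h, _⟩ := ha
    apply Fin.ext
    have h2 : (n - 2 - (a:ℕ)) % n = n - 2 - (a:ℕ) := Nat.mod_eq_of_lt (by omega)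
    simp [h2, Nat.mod_eq_of_lt (show n - 2 - (n-2-(a:ℕ)) < n by omega)]
    omega



lemma des_cons (a b : ℕ) (t : List ℕ) :
    des (a :: b :: t) = des (b :: t) + (if b < a then 1 else 0) := by
  simp only [des, List.tail_cons, List.zip_cons_cons, List.countP_cons]
  simp

lemma des_ofFn : ∀ (n : ℕ) (v : Fin n → ℕ), des (List.ofFn v) = (descs v).card := by
  intro n
  induction n with
  | zero => intro v; simp [des, descs]
  | succ m ih =>
    intro v
    rcases Nat.eq_zero_or_pos m with hm | hm
    · subst hm
      have he : List.ofFn v = [v 0] := by simp [List.ofFn_succ]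
      rw [he]
      have h2 : descs v = ∅ := by
        ext i
        simp only [descs, mem_filter, mem_univ, true_and, Finset.notMem_empty, iff_false]
        rintro ⟨h, -⟩
        have := i.isLt; omega
      rw [h2]
      simp [des]
    · obtain ⟨m', rfl⟩ : ∃ m', m = m' + 1 := ⟨m - 1, by omega⟩
      have e1 : List.ofFn v = v 0 :: List.ofFn (fun i : Fin (m'+1) => v i.succ) :=
        List.ofFn_succ
      have e2 : List.ofFn (fun i : Fin (m'+1) => v i.succ) =
          v (Fin.succ 0) :: List.ofFn (fun i : Fin m' => v i.succ.succ) := by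
        rw [List.ofFn_succ]
      rw [e1, e2, des_cons, ← e2, ih]
      have hR : (descs v).card = (descs (fun i : Fin (m'+1) => v i.succ)).card +
          (if v (Fin.succ 0) < v 0 then 1 else 0) := by
        rw [descs, descs, card_filter, card_filter, Fin.sum_univ_succ]
        have h0 : (if ∃ h : ((0 : Fin (m'+1+1)):ℕ)+1 < m'+1+1, v ⟨((0 : Fin (m'+1+1)):ℕ)+1, h⟩ < v 0 then 1 else 0)
            = (if v (Fin.succ 0) < v 0 then 1 else 0) := by
          apply if_congr _ rfl rfl
          constructor
          · rintro ⟨h, hlt⟩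
            convert hlt using 2 <;> rfl
          · intro hlt
            refine ⟨by simp, ?_⟩
            convert hlt using 2 <;> rfl
        have hsum : ∀ i : Fin (m'+1),
            (if ∃ h : ((i.succ : Fin (m'+1+1)):ℕ)+1 < m'+1+1, v ⟨((i.succ : Fin (m'+1+1)):ℕ)+1, h⟩ < v i.succ then 1 else 0)
            = (if ∃ h : (i:ℕ)+1 < m'+1, v (⟨(i:ℕ)+1, h⟩ : Fin (m'+1)).succ < v i.succ then 1 else 0) := by
          intro i
          apply if_congr _ rfl rfl
          constructor
          · rintro ⟨h, hlt⟩
            refine ⟨by simpa using h, ?_⟩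
            convert hlt using 2 <;> rfl
          · rintro ⟨h, hlt⟩
            refine ⟨by simpa using h, ?_⟩
            convert hlt using 2 <;> rfl
        rw [h0]
        simp only [hsum]
        exact Nat.add_comm _ _
      rw [hR]

lemma des_eq_descs_card {n : ℕ} (w : Fin n → Fin n) :
    des (List.ofFn fun i => (w i : ℕ) + 1) = (descs w).card := by
  have hg : StrictMono (fun x : Fin n => (x:ℕ)+1) := fun a b hab => by
    simpa using Fin.lt_iff_val_lt_val.mp hab
  have : (fun i => (w i : ℕ) + 1) = (fun x : Fin n => (x:ℕ)+1) ∘ w := rfl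
  rw [this, des_ofFn]
  congr 1
  ext i
  simp only [descs, mem_filter, mem_univ, true_and, Function.comp_apply]
  constructor
  · rintro ⟨h, hlt⟩; exact ⟨h, by simpa using hlt⟩
  · rintro ⟨h, hlt⟩; exact ⟨h, by simpa using hlt⟩

lemma card_strictMono (n M : ℕ) :
    ((univ : Finset (Fin n → Fin M)).filter StrictMono).card = M.choose n := by
  rw [← Fintype.card_subtype]
  have e : {f : Fin n → Fin M // StrictMono f} ≃ {s : Finset (Fin M) // s.card = n} := by
    refine ⟨fun f => ⟨Finset.image f.1 univ, by
        rw [Finset.card_image_of_injective _ f.2.injective, card_univ, Fintype.card_fin]⟩,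
      fun s => ⟨fun i => s.1.orderEmbOfFin s.2 i, (s.1.orderEmbOfFin s.2).strictMono⟩,
      fun f => ?_, fun s => ?_⟩
    · apply Subtype.ext
      exact (Finset.orderEmbOfFin_unique _ (fun x => Finset.mem_image_of_mem _ (mem_univ x))
        f.2).symm
    · apply Subtype.ext
      apply Finset.coe_injective
      rw [coe_image, coe_univ, Set.image_univ]
      exact Finset.range_orderEmbOfFin _ _
  rw [Fintype.card_congr e, Fintype.card_finset_len, Fintype.card_fin]

lemma strictMono_val_le {n M : ℕ} {x : Fin n → Fin M} (hx : StrictMono x) :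
    ∀ d : ℕ, ∀ i j : Fin n, (j:ℕ) = (i:ℕ) + d → (x i : ℕ) + d ≤ (x j : ℕ) := by
  intro d
  induction d with
  | zero => intro i j hj; have : j = i := Fin.ext (by omega); subst this; omega
  | succ d ih =>
    intro i j hj
    have h1 : (i:ℕ)+1 < n := by have := j.isLt; omega
    have h2 := ih ⟨(i:ℕ)+1, h1⟩ j (by simp; omega)
    have h3 : x i < x ⟨(i:ℕ)+1, h1⟩ := hx (by simp [Fin.lt_iff_val_lt_val])
    have h4 := Fin.lt_iff_val_lt_val.mp h3
    omega

lemma card_monotone (n K : ℕ) (hn : 0 < n) :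
    ((univ : Finset (Fin n → Fin K)).filter Monotone).card = (K + n - 1).choose n := by
  rcases Nat.eq_zero_or_pos K with hK | hK
  · subst hK
    have h1 : ((univ : Finset (Fin n → Fin 0)).filter Monotone) = ∅ := by
      apply eq_empty_of_forall_notMem
      intro c _
      exact (c ⟨0, hn⟩).elim0
    rw [h1, card_empty, eq_comm]
    exact Nat.choose_eq_zero_of_lt (by omega)
  · have hKn : 0 < K + n - 1 + 1 := by omega
    have key : ((univ : Finset (Fin n → Fin K)).filter Monotone).card =
        ((univ : Finset (Fin n → Fin (K + n - 1))).filter StrictMono).card := by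
      apply card_nbij'
        (i := fun c => fun i => ⟨min ((c i : ℕ) + (i:ℕ)) (K + n - 2), by
          have := i.isLt; omega⟩)
        (j := fun x => fun i => ⟨min ((x i : ℕ) - (i:ℕ)) (K - 1), by omega⟩)
      · intro c hc
        simp only [mem_coe, mem_filter, mem_univ, true_and] at hc ⊢
        apply strictMono_of_adj
        intro i hi
        have h1 : c i ≤ c ⟨(i:ℕ)+1, hi⟩ := hc (by simp [Fin.le_iff_val_le_val])
        have h2 := Fin.le_iff_val_le_val.mp h1
        have h3 := (c i).isLt
        have h4 := (c ⟨(i:ℕ)+1, hi⟩).isLt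
        have h5 := i.isLt
        simp only [Fin.lt_iff_val_lt_val]
        omega
      · intro x hx
        simp only [mem_coe, mem_filter, mem_univ, true_and] at hx ⊢
        apply monotone_of_adj
        intro i hi
        have h1 : x i < x ⟨(i:ℕ)+1, hi⟩ := hx (by simp [Fin.lt_iff_val_lt_val])
        have h2 := Fin.lt_iff_val_lt_val.mp h1
        have h0 := strictMono_val_le hx (i:ℕ) ⟨0, by omega⟩ i (by simp)
        simp only [Fin.le_iff_val_le_val]
        omega
      · intro c hc
        simp only [mem_coe, mem_filter, mem_univ, true_and] at hc
        funext i
        apply Fin.ext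
        have h3 := (c i).isLt
        have h5 := i.isLt
        simp only []
        omega
      · intro x hx
        simp only [mem_coe, mem_filter, mem_univ, true_and] at hx
        funext i
        apply Fin.ext
        have h0 := strictMono_val_le hx (i:ℕ) ⟨0, by omega⟩ i (by simp)
        have h1 := strictMono_val_le hx (n - 1 - (i:ℕ)) i ⟨n-1, by omega⟩ (by simp; omega)
        have h2 := (x ⟨n-1, by omega⟩).isLt
        have h5 := i.isLt
        simp only []
        omega
    rw [key, card_strictMono]

section BCount


variable {n N m : ℕ}

def valid (w : Fin n → Fin N) (b : Fin n → Fin (m+1)) : Prop :=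
  ∀ i : Fin n, ∀ h : (i:ℕ)+1 < n,
    b i ≤ b ⟨(i:ℕ)+1, h⟩ ∧ (¬ w i < w ⟨(i:ℕ)+1, h⟩ → b i < b ⟨(i:ℕ)+1, h⟩)

instance (w : Fin n → Fin N) (b : Fin n → Fin (m+1)) : Decidable (valid w b) := by
  unfold valid; infer_instance

def Dlt (w : Fin n → Fin N) (i : Fin n) : ℕ :=
  ((weaks w).filter (fun l : Fin n => (l:ℕ) < (i:ℕ))).card

def Ege (w : Fin n → Fin N) (i : Fin n) : ℕ :=
  ((weaks w).filter (fun l : Fin n => (i:ℕ) ≤ (l:ℕ))).card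

lemma Dlt_add_Ege (w : Fin n → Fin N) (i : Fin n) :
    Dlt w i + Ege w i = (weaks w).card := by
  rw [Dlt, Ege]
  rw [show ((weaks w).filter (fun l : Fin n => (i:ℕ) ≤ (l:ℕ)))
      = ((weaks w).filter (fun l : Fin n => ¬ ((l:ℕ) < (i:ℕ)))) from
    filter_congr (by intro l _; simp [not_lt])]
  exact card_filter_add_card_filter_not _

lemma Dlt_le (w : Fin n → Fin N) (i : Fin n) : Dlt w i ≤ (weaks w).card :=
  card_le_card (filter_subset _ _)

lemma mem_weaks_iff (w : Fin n → Fin N) (i : Fin n) (h : (i:ℕ)+1 < n) :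
    i ∈ weaks w ↔ ¬ w i < w ⟨(i:ℕ)+1, h⟩ := by
  simp only [weaks, mem_filter, mem_univ, true_and]
  constructor
  · rintro ⟨h', hw⟩; exact hw
  · intro hw; exact ⟨h, hw⟩

lemma Dlt_succ (w : Fin n → Fin N) (i : Fin n) (h : (i:ℕ)+1 < n) :
    Dlt w ⟨(i:ℕ)+1, h⟩ = Dlt w i + (if ¬ w i < w ⟨(i:ℕ)+1, h⟩ then 1 else 0) := by
  rw [Dlt, Dlt]
  have hsplit : ((weaks w).filter (fun l : Fin n => (l:ℕ) < (i:ℕ)+1))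
      = ((weaks w).filter (fun l : Fin n => (l:ℕ) < (i:ℕ)))
        ∪ ((weaks w).filter (fun l : Fin n => l = i)) := by
    rw [← filter_or]
    apply filter_congr
    intro l _
    constructor
    · intro hl
      rcases Nat.lt_or_ge (l:ℕ) (i:ℕ) with h' | h'
      · exact Or.inl h'
      · exact Or.inr (Fin.ext (by omega))
    · rintro (h' | h')
      · omega
      · subst h'; omega
  rw [hsplit, card_union_of_disjoint (by
    rw [disjoint_left]
    intro a ha ha'
    simp only [mem_filter] at ha ha'
    have h2 := ha'.2; subst h2
    exact absurd ha.2 (by omega))]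
  congr 1
  by_cases hw : w i < w ⟨(i:ℕ)+1, h⟩
  · rw [if_neg (by simp [hw])]
    rw [show ((weaks w).filter (fun l : Fin n => l = i)) = ∅ from ?_]
    · simp
    · ext l
      simp only [mem_filter, notMem_empty, iff_false, not_and]
      rintro hl rfl
      exact ((mem_weaks_iff w l h).mp hl) hw
  · rw [if_pos hw]
    rw [show ((weaks w).filter (fun l : Fin n => l = i)) = {i} from ?_]
    · simp
    · ext l
      simp only [mem_filter, mem_singleton]
      constructor
      · rintro ⟨-, h'⟩; exact h'
      · rintro rfl; exact ⟨(mem_weaks_iff w l h).mpr hw, rfl⟩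

lemma Ege_succ (w : Fin n → Fin N) (i : Fin n) (h : (i:ℕ)+1 < n) :
    Ege w i = Ege w ⟨(i:ℕ)+1, h⟩ + (if ¬ w i < w ⟨(i:ℕ)+1, h⟩ then 1 else 0) := by
  have h1 := Dlt_add_Ege w i
  have h2 := Dlt_add_Ege w ⟨(i:ℕ)+1, h⟩
  have h3 := Dlt_succ w i h
  have h4 := Dlt_le w ⟨(i:ℕ)+1, h⟩
  omega

lemma Ege_last (w : Fin n → Fin N) (i : Fin n) (hi : (i:ℕ) = n - 1) :
    Ege w i = 0 := by
  rw [Ege, card_eq_zero]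
  apply eq_empty_of_forall_notMem
  intro l hl
  simp only [mem_filter, weaks, mem_univ, true_and] at hl
  obtain ⟨⟨h', -⟩, hli⟩ := hl
  omega

lemma Dlt_last (w : Fin n → Fin N) (i : Fin n) (hi : (i:ℕ) = n - 1) :
    Dlt w i = (weaks w).card := by
  have := Dlt_add_Ege w i
  rw [Ege_last w i hi] at this
  omega

lemma valid_lb {w : Fin n → Fin N} {b : Fin n → Fin (m+1)} (hb : valid w b) :
    ∀ i : Fin n, Dlt w i ≤ (b i : ℕ) := by
  have key : ∀ d : ℕ, ∀ hd : d < n, Dlt w ⟨d, hd⟩ ≤ (b ⟨d, hd⟩ : ℕ) := by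
    intro d
    induction d with
    | zero =>
      intro hd
      have : Dlt w ⟨0, hd⟩ = 0 := by
        rw [Dlt, card_eq_zero]
        apply eq_empty_of_forall_notMem
        intro l hl
        simp only [mem_filter] at hl
        omega
      omega
    | succ d ih =>
      intro hd
      have hdn : d < n := by omega
      have h1 := ih hdn
      have h2 : Dlt w ⟨d+1, hd⟩ = Dlt w ⟨d, hdn⟩
          + (if ¬ w ⟨d, hdn⟩ < w ⟨d+1, hd⟩ then 1 else 0) := Dlt_succ w ⟨d, hdn⟩ hd
      have h3 : b ⟨d, hdn⟩ ≤ b ⟨d+1, hd⟩ ∧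
          (¬ w ⟨d, hdn⟩ < w ⟨d+1, hd⟩ → b ⟨d, hdn⟩ < b ⟨d+1, hd⟩) := hb ⟨d, hdn⟩ hd
      by_cases hw : w ⟨d, hdn⟩ < w ⟨d+1, hd⟩
      · rw [if_neg (by simp [hw])] at h2
        have h4 := Fin.le_iff_val_le_val.mp h3.1
        omega
      · rw [if_pos hw] at h2
        have h4 := Fin.lt_iff_val_lt_val.mp (h3.2 hw)
        omega
  intro i
  have := key (i:ℕ) i.isLt
  simpa using this

lemma valid_ub {w : Fin n → Fin N} {b : Fin n → Fin (m+1)} (hn : 0 < n) (hb : valid w b) :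
    ∀ i : Fin n, (b i : ℕ) + Ege w i ≤ m := by
  have key : ∀ e : ℕ, ∀ d : ℕ, ∀ hd : d < n, n - 1 - d ≤ e →
      (b ⟨d, hd⟩ : ℕ) + Ege w ⟨d, hd⟩ ≤ m := by
    intro e
    induction e with
    | zero =>
      intro d hd hde
      have hdl : d = n - 1 := by omega
      have h0 : Ege w ⟨d, hd⟩ = 0 := Ege_last w ⟨d, hd⟩ (by simpa using hdl)
      have := (b ⟨d, hd⟩).isLt
      omega
    | succ e ih =>
      intro d hd hde
      rcases le_or_gt (n - 1 - d) e with h' | h'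
      · exact ih d hd h'
      · have hd1 : d + 1 < n := by omega
        have h2 : Ege w ⟨d, hd⟩ = Ege w ⟨d+1, hd1⟩
            + (if ¬ w ⟨d, hd⟩ < w ⟨d+1, hd1⟩ then 1 else 0) := Ege_succ w ⟨d, hd⟩ hd1
        have h3 : b ⟨d, hd⟩ ≤ b ⟨d+1, hd1⟩ ∧
            (¬ w ⟨d, hd⟩ < w ⟨d+1, hd1⟩ → b ⟨d, hd⟩ < b ⟨d+1, hd1⟩) := hb ⟨d, hd⟩ hd1
        have h4 := ih (d+1) hd1 (by omega)
        by_cases hw : w ⟨d, hd⟩ < w ⟨d+1, hd1⟩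
        · rw [if_neg (by simp [hw])] at h2
          have h5 := Fin.le_iff_val_le_val.mp h3.1
          omega
        · rw [if_pos hw] at h2
          have h5 := Fin.lt_iff_val_lt_val.mp (h3.2 hw)
          omega
  intro i
  have := key (n - 1 - (i:ℕ)) (i:ℕ) i.isLt le_rfl
  simpa using this

lemma Bset_card (hn : 0 < n) (w : Fin n → Fin N) :
    ((univ : Finset (Fin n → Fin (m+1))).filter (valid w)).card
      = (m + 1 + (ascs w).card).choose n := by
  have hWa := ascs_card_add_weaks_card w
  rcases le_or_gt ((weaks w).card) m with hWm | hWm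
  · have key : ((univ : Finset (Fin n → Fin (m+1))).filter (valid w)).card
        = ((univ : Finset (Fin n → Fin (m+1-(weaks w).card))).filter Monotone).card := by
      apply card_nbij'
        (i := fun b => fun i => ⟨min ((b i : ℕ) - Dlt w i) (m - (weaks w).card), by omega⟩)
        (j := fun c => fun i => ⟨min ((c i : ℕ) + Dlt w i) m, by omega⟩)
      · intro b hb
        simp only [mem_coe, mem_filter, mem_univ, true_and] at hb ⊢
        apply monotone_of_adj
        intro i h
        have h1 := Dlt_succ w i h
        have h2 := hb i h
        have h3 := valid_lb hb i
        have h4 := valid_lb hb ⟨(i:ℕ)+1, h⟩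
        have h5 := Fin.le_iff_val_le_val.mp h2.1
        simp only [Fin.le_iff_val_le_val]
        by_cases hw : w i < w ⟨(i:ℕ)+1, h⟩
        · rw [if_neg (by simp [hw])] at h1
          omega
        · rw [if_pos hw] at h1
          have h6 := Fin.lt_iff_val_lt_val.mp (h2.2 hw)
          omega
      · intro c hc
        simp only [mem_coe, mem_filter, mem_univ, true_and] at hc ⊢
        intro i h
        have h1 := Dlt_succ w i h
        have h2 : c i ≤ c ⟨(i:ℕ)+1, h⟩ := hc (by simp [Fin.le_iff_val_le_val])
        have h3 := Fin.le_iff_val_le_val.mp h2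
        have h4 := (c i).isLt
        have h5 := (c ⟨(i:ℕ)+1, h⟩).isLt
        have h6 := Dlt_le w i
        have h7 := Dlt_le w ⟨(i:ℕ)+1, h⟩
        constructor
        · simp only [Fin.le_iff_val_le_val]
          by_cases hw : w i < w ⟨(i:ℕ)+1, h⟩
          · rw [if_neg (by simp [hw])] at h1
            omega
          · rw [if_pos hw] at h1
            omega
        · intro hw
          simp only [Fin.lt_iff_val_lt_val]
          rw [if_pos hw] at h1
          omega
      · intro b hb
        simp only [mem_coe, mem_filter, mem_univ, true_and] at hb
        funext i
        apply Fin.ext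
        have h1 := valid_lb hb i
        have h2 := valid_ub hn hb i
        have h3 := Dlt_add_Ege w i
        have h4 := (b i).isLt
        simp only []
        omega
      · intro c hc
        simp only [mem_coe, mem_filter, mem_univ, true_and] at hc
        funext i
        apply Fin.ext
        have h4 := (c i).isLt
        have h6 := Dlt_le w i
        simp only []
        omega
    rw [key, card_monotone _ _ hn]
    congr 1
    omega
  · have hempty : ((univ : Finset (Fin n → Fin (m+1))).filter (valid w)) = ∅ := by
      apply eq_empty_of_forall_notMem
      intro b hb
      simp only [mem_filter, mem_univ, true_and] at hb
      have h1 := valid_lb hb ⟨n-1, by omega⟩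
      rw [Dlt_last w _ (by simp)] at h1
      have := (b ⟨n-1, by omega⟩).isLt
      omega
    rw [hempty, card_empty, eq_comm]
    apply Nat.choose_eq_zero_of_lt
    omega

end BCount
lemma sum_Bset (n m N : ℕ) (hn : 0 < n) (hN : 0 < N) :
    ∑ w : Fin n → Fin N, ((univ : Finset (Fin n → Fin (m+1))).filter (valid w)).card
      = (N*(m+1)).choose n := by
  rw [← card_strictMono n (N*(m+1)), ← Finset.card_sigma]
  have hmul : N * (m+1) = N * m + N := Nat.mul_succ N m
  apply card_nbij'
    (i := fun p => fun i => (⟨(p.1 i : ℕ) + N * (p.2 i : ℕ), by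
      have h1 := (p.1 i).isLt
      have h2 := (p.2 i).isLt
      have h3 : N * (p.2 i : ℕ) ≤ N * m := Nat.mul_le_mul_left N (by omega)
      omega⟩ : Fin (N*(m+1))))
    (j := fun x => ⟨fun i => ⟨(x i : ℕ) % N, Nat.mod_lt _ hN⟩,
      fun i => ⟨(x i : ℕ) / N, by
        exact Nat.div_lt_of_lt_mul (x i).isLt⟩⟩)
  · rintro ⟨w, b⟩ hp
    simp only [mem_coe, mem_sigma, mem_univ, true_and, mem_filter] at hp ⊢
    apply strictMono_of_adj
    intro i h
    simp only [Fin.lt_iff_val_lt_val]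
    have hv := hp i h
    have h1 := (w i).isLt
    have h2 := (w ⟨(i:ℕ)+1, h⟩).isLt
    by_cases hw : w i < w ⟨(i:ℕ)+1, h⟩
    · have h5 := Fin.lt_iff_val_lt_val.mp hw
      have hb := Fin.le_iff_val_le_val.mp hv.1
      have h6 : N * (b i : ℕ) ≤ N * (b ⟨(i:ℕ)+1, h⟩ : ℕ) := Nat.mul_le_mul_left N hb
      omega
    · have hb := Fin.lt_iff_val_lt_val.mp (hv.2 hw)
      have h6 : N * ((b i : ℕ) + 1) ≤ N * (b ⟨(i:ℕ)+1, h⟩ : ℕ) := Nat.mul_le_mul_left N (by omega)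
      have h7 : N * ((b i : ℕ) + 1) = N * (b i : ℕ) + N := Nat.mul_succ N _
      omega
  · intro x hx
    simp only [mem_coe, mem_filter, mem_univ, true_and] at hx
    simp only [mem_coe, mem_sigma, mem_univ, true_and, mem_filter]
    intro i h
    have hlt : x i < x ⟨(i:ℕ)+1, h⟩ := hx (by simp [Fin.lt_iff_val_lt_val])
    have hlt' := Fin.lt_iff_val_lt_val.mp hlt
    have hq : (x i : ℕ) / N ≤ (x ⟨(i:ℕ)+1, h⟩ : ℕ) / N :=
      Nat.div_le_div_right (le_of_lt hlt')
    constructor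
    · exact hq
    · intro hw
      simp only [Fin.lt_iff_val_lt_val] at hw ⊢
      rcases lt_or_ge ((x i : ℕ) / N) ((x ⟨(i:ℕ)+1, h⟩ : ℕ) / N) with h' | h'
      · exact h'
      · exfalso
        have heq : (x ⟨(i:ℕ)+1, h⟩ : ℕ) / N = (x i : ℕ) / N := le_antisymm h' hq
        have e1 := Nat.div_add_mod (x i : ℕ) N
        have e2 := Nat.div_add_mod (x ⟨(i:ℕ)+1, h⟩ : ℕ) N
        rw [heq] at e2
        apply hw
        generalize N * ((x i : ℕ) / N) = t at e1 e2
        omega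
  · rintro ⟨w, b⟩ hp
    refine Sigma.ext ?_ ?_
    · funext i
      apply Fin.ext
      simp only []
      rw [Nat.add_mul_mod_self_left, Nat.mod_eq_of_lt (w i).isLt]
    · apply heq_of_eq
      funext i
      apply Fin.ext
      simp only []
      rw [Nat.add_mul_div_left _ _ hN, Nat.div_eq_of_lt (w i).isLt, Nat.zero_add]
  · intro x hx
    funext i
    apply Fin.ext
    simp only []
    exact Nat.mod_add_div _ _

lemma core_ascs (n m N : ℕ) (hn : 0 < n) :
    ∑ w : Fin n → Fin N, (m + 1 + (ascs w).card).choose n = (N*(m+1)).choose n := by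
  rcases Nat.eq_zero_or_pos N with hN | hN
  · subst hN
    have he : IsEmpty (Fin n → Fin 0) := ⟨fun w => (w ⟨0, hn⟩).elim0⟩
    rw [univ_eq_empty, sum_empty, Nat.zero_mul, eq_comm]
    exact Nat.choose_eq_zero_of_lt hn
  · rw [← sum_Bset n m N hn hN]
    apply Finset.sum_congr rfl
    intro w _
    exact (Bset_card hn w).symm

lemma core_descs (n m N : ℕ) (hn : 0 < n) :
    ∑ w : Fin n → Fin N, (m + 1 + (descs w).card).choose n = (N*(m+1)).choose n := by
  rw [← core_ascs n m N hn]
  have hinv : Function.Involutive (fun w : Fin n → Fin N => w ∘ Fin.rev) := by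
    intro w
    funext i
    simp [Fin.rev_rev]
  apply Finset.sum_nbij' (i := fun w => w ∘ Fin.rev) (j := fun w => w ∘ Fin.rev)
    (fun w _ => mem_univ _) (fun w _ => mem_univ _)
    (fun w _ => hinv w) (fun w _ => hinv w)
  intro w _
  have h2 := descs_comp_rev_card (w ∘ Fin.rev)
  rw [show (w ∘ Fin.rev) ∘ Fin.rev = w from funext fun i => by simp [Fin.rev_rev]] at h2
  rw [h2]

lemma avoid_sum {n m : ℕ} (hn : 0 < n) (S : Finset (Fin n)) :
    ∑ w ∈ (univ : Finset (Fin n → Fin n)).filter (fun w => ∀ i, w i ∉ S),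
      (m + 1 + (descs w).card).choose n = ((n - S.card) * (m+1)).choose n := by
  have hT : (Sᶜ).card = n - S.card := by
    rw [card_compl, Fintype.card_fin]
  rw [← core_descs n m (n - S.card) hn]
  symm
  apply Finset.sum_bij (i := fun v _ => (⇑(Sᶜ.orderEmbOfFin hT)) ∘ v)
  · intro v _
    simp only [mem_filter, mem_univ, true_and, Function.comp_apply]
    intro i
    exact Finset.mem_compl.mp (Finset.orderEmbOfFin_mem Sᶜ hT (v i))
  · intro v _ v' _ hvv
    funext i
    exact (Sᶜ.orderEmbOfFin hT).injective (congrFun hvv i)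
  · intro w hw
    simp only [mem_filter, mem_univ, true_and] at hw
    have hex : ∀ i, ∃ y, Sᶜ.orderEmbOfFin hT y = w i := by
      intro i
      have h1 : w i ∈ Set.range ⇑(Sᶜ.orderEmbOfFin hT) := by
        rw [Finset.range_orderEmbOfFin]
        simpa [Finset.mem_compl] using hw i
      exact h1
    exact ⟨fun i => (hex i).choose, mem_univ _, funext fun i => (hex i).choose_spec⟩
  · intro v _
    rw [descs_comp_strictMono (Sᶜ.orderEmbOfFin hT).strictMono]

lemma main_count (n k m : ℕ) (hn : 0 < n) (hk : k ≤ n) :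
    ∑ w ∈ (univ : Finset (Fin n → Fin n)).filter
        (fun w => ∀ j : Fin n, (j:ℕ) < k → ∃ i, w i = j),
      ((m + 1 + (descs w).card).choose n : ℤ)
    = ∑ j ∈ range (k+1), (-1)^j * (k.choose j : ℤ) * (((n-j)*(m+1)).choose n : ℤ) := by
  classical
  set Kset : Finset (Fin n) := univ.filter (fun j => (j:ℕ) < k) with hKset
  have hKcard : Kset.card = k := by
    have : Kset = Finset.map (Fin.castLEEmb hk) univ := by
      ext j
      simp only [hKset, mem_filter, mem_univ, true_and, mem_map]
      constructor
      · intro hj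
        exact ⟨⟨(j:ℕ), hj⟩, Fin.ext (by simp)⟩
      · rintro ⟨i, rfl⟩
        simpa using i.isLt
    rw [this, card_map, card_univ, Fintype.card_fin]
  have hP : ∀ w : Fin n → Fin n,
      (∀ j : Fin n, (j:ℕ) < k → ∃ i, w i = j) ↔ (Kset \ image w univ) = ∅ := by
    intro w
    rw [sdiff_eq_empty_iff_subset]
    constructor
    · intro hw x hx
      simp only [hKset, mem_filter, mem_univ, true_and] at hx
      obtain ⟨i, hi⟩ := hw x hx
      exact mem_image.mpr ⟨i, mem_univ _, hi⟩
    · intro hsub j hj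
      have : j ∈ Kset := by simp [hKset, hj]
      obtain ⟨i, -, hi⟩ := mem_image.mp (hsub this)
      exact ⟨i, hi⟩
  have hps : ∀ w : Fin n → Fin n,
      (Kset \ image w univ).powerset = Kset.powerset.filter (fun S => ∀ i, w i ∉ S) := by
    intro w
    ext S
    simp only [mem_powerset, mem_filter, subset_sdiff]
    constructor
    · rintro ⟨h1, h2⟩
      refine ⟨h1, fun i hi => ?_⟩
      exact (disjoint_right.mp h2) (mem_image.mpr ⟨i, mem_univ _, rfl⟩) hi
    · rintro ⟨h1, h2⟩
      refine ⟨h1, disjoint_right.mpr fun a ha => ?_⟩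
      obtain ⟨i, -, rfl⟩ := mem_image.mp ha
      exact h2 i
  calc ∑ w ∈ (univ : Finset (Fin n → Fin n)).filter
        (fun w => ∀ j : Fin n, (j:ℕ) < k → ∃ i, w i = j),
      ((m + 1 + (descs w).card).choose n : ℤ)
      = ∑ w : Fin n → Fin n, (if (∀ j : Fin n, (j:ℕ) < k → ∃ i, w i = j)
          then ((m + 1 + (descs w).card).choose n : ℤ) else 0) := sum_filter _ _
    _ = ∑ w : Fin n → Fin n, ∑ S ∈ Kset.powerset,
          (if (∀ i, w i ∉ S) then ((-1 : ℤ)^S.card) else 0)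
            * ((m + 1 + (descs w).card).choose n : ℤ) := by
        apply sum_congr rfl
        intro w _
        rw [← sum_mul]
        have h2 := sum_powerset_neg_one_pow_card (x := Kset \ image w univ)
        rw [hps w, sum_filter] at h2
        rw [h2]
        by_cases hw : ∀ j : Fin n, (j:ℕ) < k → ∃ i, w i = j
        · rw [if_pos hw, if_pos ((hP w).mp hw), one_mul]
        · rw [if_neg hw, if_neg (fun hc => hw ((hP w).mpr hc)), zero_mul]
    _ = ∑ S ∈ Kset.powerset, ((-1 : ℤ)^S.card) * (((n - S.card)*(m+1)).choose n : ℤ) := by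
        rw [sum_comm]
        apply sum_congr rfl
        intro S _
        have hcast := avoid_sum (m := m) hn S
        calc ∑ w : Fin n → Fin n,
            (if (∀ i, w i ∉ S) then ((-1 : ℤ)^S.card) else 0)
              * ((m + 1 + (descs w).card).choose n : ℤ)
            = ∑ w ∈ (univ : Finset (Fin n → Fin n)).filter (fun w => ∀ i, w i ∉ S),
                ((-1 : ℤ)^S.card) * ((m + 1 + (descs w).card).choose n : ℤ) := by
              rw [sum_filter]
              apply sum_congr rfl
              intro w _
              by_cases hw : ∀ i, w i ∉ S
              · rw [if_pos hw, if_pos hw]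
              · rw [if_neg hw, if_neg hw, zero_mul]
          _ = ((-1 : ℤ)^S.card) * (((n - S.card)*(m+1)).choose n : ℤ) := by
              rw [← mul_sum]
              congr 1
              rw [← hcast]
              push_cast
              rfl
    _ = ∑ j ∈ range (k+1), (-1)^j * (k.choose j : ℤ) * (((n-j)*(m+1)).choose n : ℤ) := by
        rw [sum_powerset, hKcard]
        apply sum_congr rfl
        intro j hj
        rw [sum_congr rfl (fun S hS => by rw [(mem_powersetCard.mp hS).2]),
          sum_const, card_powersetCard, hKcard, nsmul_eq_mul]
        ring


end Stmt12

theorem stmt_12 (n k : ℕ) (hn : 0 < n) (hk : k ≤ n) :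
    (PowerSeries.mk fun m =>
        ∑ j ∈ Finset.range (k + 1),
          (-1) ^ j * (k.choose j : ℤ) * (((n - j) * (m + 1)).choose n : ℤ)) *
        (1 - PowerSeries.X) ^ (n + 1) =
      ∑ w ∈ Finset.univ.filter
          (fun w : Fin n → Fin n => ∀ j : Fin n, (j : ℕ) < k → ∃ i, w i = j),
        (PowerSeries.X : PowerSeries ℤ) ^ (n - 1 - des (List.ofFn fun i => (w i : ℕ) + 1)) := by
  classical
  have hsum : (∑ w ∈ Finset.univ.filter
          (fun w : Fin n → Fin n => ∀ j : Fin n, (j : ℕ) < k → ∃ i, w i = j),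
        (PowerSeries.X : PowerSeries ℤ) ^ (n - 1 - des (List.ofFn fun i => (w i : ℕ) + 1)))
      = ∑ w ∈ Finset.univ.filter
          (fun w : Fin n → Fin n => ∀ j : Fin n, (j : ℕ) < k → ∃ i, w i = j),
        (PowerSeries.X : PowerSeries ℤ) ^ (n - 1 - (Stmt12.descs w).card) := by
    apply Finset.sum_congr rfl
    intro w _
    rw [Stmt12.des_eq_descs_card]
  rw [hsum]
  have hkey : (PowerSeries.mk fun m =>
        ∑ j ∈ Finset.range (k + 1),
          (-1) ^ j * (k.choose j : ℤ) * (((n - j) * (m + 1)).choose n : ℤ))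
      = (∑ w ∈ Finset.univ.filter
          (fun w : Fin n → Fin n => ∀ j : Fin n, (j : ℕ) < k → ∃ i, w i = j),
        (PowerSeries.X : PowerSeries ℤ) ^ (n - 1 - (Stmt12.descs w).card))
        * (invOneSubPow ℤ (n+1)).val := by
    ext m
    rw [coeff_mk, invOneSubPow_val_succ_eq_mk_add_choose, Finset.sum_mul, map_sum]
    have hterm : ∀ w : Fin n → Fin n,
        (coeff m) ((PowerSeries.X : PowerSeries ℤ) ^ (n - 1 - (Stmt12.descs w).card)
            * (PowerSeries.mk fun q => ((n + q).choose n : ℤ)))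
          = ((m + 1 + (Stmt12.descs w).card).choose n : ℤ) := by
      intro w
      rw [mul_comm, coeff_mul_X_pow']
      have hd := Stmt12.descs_card_le w
      by_cases he : n - 1 - (Stmt12.descs w).card ≤ m
      · rw [if_pos he, coeff_mk]
        norm_cast
        congr 1
        omega
      · rw [if_neg he, eq_comm]
        norm_cast
        exact Nat.choose_eq_zero_of_lt (by omega)
    rw [Finset.sum_congr rfl (fun w _ => hterm w)]
    exact (Stmt12.main_count n k m hn hk).symm
  rw [hkey, ← invOneSubPow_inv_eq_one_sub_pow ℤ (n+1), mul_assoc,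
    (invOneSubPow ℤ (n+1)).val_inv, mul_one]
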